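/- For $w_{j,n} = \sum_{i=j}^n \frac{1}{i}$, the limit $\frac{1}{n}\sum_{j=1}^n w_{j,n}^2 \to \int_0^1 (\log s)^2\, ds = 2$ holds as $n \to \infty$. -/

import Mathlib

open Filter Finset Topology

lemma sumA (n : ℕ) : ∑ j ∈ Finset.Icc 1 n, (∑ i ∈ Finset.Icc j n, (1 / (i : ℝ))) = n := by
  induction n with
  | zero => simp
  | succ n ih =>
    have h1 : ∀ j ∈ Finset.Icc 1 (n+1), (∑ i ∈ Finset.Icc j (n+1), (1 / (i : ℝ)))
        = (∑ i ∈ Finset.Icc j n, (1 / (i : ℝ))) + 1 / ((n:ℝ)+1) := by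
      intro j hj
      rw [Finset.sum_Icc_succ_top (Finset.mem_Icc.mp hj).2]
      push_cast; ring
    rw [Finset.sum_congr rfl h1, Finset.sum_add_distrib,
      Finset.sum_Icc_succ_top (by omega : 1 ≤ n + 1), ih]
    simp only [Finset.sum_const, Nat.card_Icc]
    rw [show Finset.Icc (n+1) n = ∅ by rw [Finset.Icc_eq_empty]; omega]
    have : ((n:ℝ)+1) ≠ 0 := by positivity
    simp only [Finset.sum_empty, add_zero, Nat.add_sub_cancel, nsmul_eq_mul]
    push_cast
    field_simp

lemma sumB (n : ℕ) : ∑ j ∈ Finset.Icc 1 n, (∑ i ∈ Finset.Icc j n, (1 / (i : ℝ)))^2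
    = 2 * n - ∑ i ∈ Finset.Icc 1 n, (1 / (i : ℝ)) := by
  induction n with
  | zero => simp
  | succ n ih =>
    have h1 : ∀ j ∈ Finset.Icc 1 (n+1), (∑ i ∈ Finset.Icc j (n+1), (1 / (i : ℝ)))^2
        = (∑ i ∈ Finset.Icc j n, (1 / (i : ℝ)))^2
          + 2 * (1/((n:ℝ)+1)) * (∑ i ∈ Finset.Icc j n, (1 / (i : ℝ)))
          + (1/((n:ℝ)+1))^2 := by
      intro j hj
      rw [Finset.sum_Icc_succ_top (Finset.mem_Icc.mp hj).2]
      push_cast; ring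
    have hemp : Finset.Icc (n+1) n = ∅ := by rw [Finset.Icc_eq_empty]; omega
    rw [Finset.sum_congr rfl h1, Finset.sum_add_distrib, Finset.sum_add_distrib,
      Finset.sum_Icc_succ_top (by omega : 1 ≤ n + 1), ih, ← Finset.mul_sum,
      Finset.sum_Icc_succ_top (by omega : 1 ≤ n + 1), sumA n,
      show (∑ i ∈ Finset.Icc 1 (n+1), (1 / (i : ℝ)))
        = (∑ i ∈ Finset.Icc 1 n, (1 / (i : ℝ))) + 1/((n:ℝ)+1) by
        rw [Finset.sum_Icc_succ_top (by omega : 1 ≤ n + 1)]; push_cast; ring]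
    simp only [hemp, Finset.sum_empty, Finset.sum_const, Nat.card_Icc, Nat.add_sub_cancel,
      nsmul_eq_mul]
    have h2 : ((n:ℝ)+1) ≠ 0 := by positivity
    push_cast
    field_simp
    ring

open MeasureTheory Real in
lemma logSqIntOn : IntegrableOn (fun s => (Real.log s)^2) (Set.Ioc (0:ℝ) 1) := by
  have hg : IntegrableOn (fun s : ℝ => 16 * s ^ (-(1/2) : ℝ)) (Set.Ioc (0:ℝ) 1) := by
    have := (intervalIntegral.intervalIntegrable_rpow'
      (by norm_num : (-1:ℝ) < -(1/2)) (a := 0) (b := 1)).const_mul 16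
    rwa [intervalIntegrable_iff_integrableOn_Ioc_of_le (by norm_num)] at this
  refine Integrable.mono hg ((Real.measurable_log.pow_const 2).aestronglyMeasurable.restrict) ?_
  filter_upwards [ae_restrict_mem measurableSet_Ioc] with s hs
  have hs0 : 0 < s := hs.1
  have hs1 : s ≤ 1 := hs.2
  set t := s ^ (-(1/4) : ℝ) with ht
  have ht0 : 0 < t := Real.rpow_pos_of_pos hs0 _
  have hlog : -Real.log s = 4 * Real.log t := by
    rw [ht, Real.log_rpow hs0]; ring
  have hle : -Real.log s ≤ 4 * t := by
    rw [hlog]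
    have := Real.log_le_sub_one_of_pos ht0
    nlinarith
  have hnn : 0 ≤ -Real.log s := by
    simpa using Real.log_nonpos hs0.le hs1
  have hsq : (Real.log s)^2 ≤ 16 * t^2 := by nlinarith
  have htt : t^2 = s ^ (-(1/2) : ℝ) := by
    rw [ht, ← Real.rpow_natCast (s ^ (-(1/4):ℝ)) 2, ← Real.rpow_mul hs0.le]
    norm_num
  rw [Real.norm_eq_abs, Real.norm_eq_abs, abs_of_nonneg (sq_nonneg _),
    abs_of_nonneg (by positivity : (0:ℝ) ≤ 16 * s ^ (-(1/2):ℝ))]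
  rw [htt] at hsq; linarith

open MeasureTheory Real in
lemma integralPart : (∫ s in (0:ℝ)..1, (Real.log s) ^ 2) = 2 := by
  set F : ℝ → ℝ := fun s => s * (Real.log s)^2 - 2 * (s * Real.log s) + 2 * s with hF
  have hIcc : IntegrableOn (fun s => (Real.log s)^2) (Set.Icc (0:ℝ) 1) := by
    rw [integrableOn_Icc_iff_integrableOn_Ioc]; exact logSqIntOn
  set G : ℝ → ℝ := fun a => ∫ t in a..1, (Real.log t)^2 with hG
  have hcont : ContinuousOn G (Set.uIcc (0:ℝ) 1) := by
    apply intervalIntegral.continuousOn_primitive_interval_left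
    rwa [Set.uIcc_of_le (by norm_num : (0:ℝ) ≤ 1)]
  rw [Set.uIcc_of_le (by norm_num : (0:ℝ) ≤ 1)] at hcont
  have h1 : Tendsto G (𝓝[>] (0:ℝ)) (𝓝 (G 0)) := by
    have hsub : 𝓝[>] (0:ℝ) ≤ 𝓝[Set.Ioc (0:ℝ) 1] 0 :=
      nhdsWithin_le_of_mem (Ioc_mem_nhdsGT_of_mem ⟨le_refl 0, zero_lt_one⟩)
    exact (hcont 0 ⟨le_rfl, zero_le_one⟩).tendsto.mono_left
      (hsub.trans (nhdsWithin_mono _ Set.Ioc_subset_Icc_self))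
  have hFtend : Tendsto F (𝓝[>] (0:ℝ)) (𝓝 0) := by
    have t1 : Tendsto (fun a : ℝ => a * (Real.log a)^2) (𝓝[>] (0:ℝ)) (𝓝 0) := by
      have := (tendsto_log_mul_rpow_nhdsGT_zero (by norm_num : (0:ℝ) < 1/2)).pow 2
      rw [show ((0:ℝ)^2) = 0 by norm_num] at this
      refine this.congr' ?_
      filter_upwards [self_mem_nhdsWithin] with a (ha : 0 < a)
      rw [mul_pow, ← Real.rpow_natCast (a ^ ((1:ℝ)/2)) 2, ← Real.rpow_mul ha.le]
      norm_num; ring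
    have t2 : Tendsto (fun a : ℝ => a * Real.log a) (𝓝[>] (0:ℝ)) (𝓝 0) := by
      have := tendsto_log_mul_rpow_nhdsGT_zero (by norm_num : (0:ℝ) < 1)
      refine this.congr' ?_
      filter_upwards [self_mem_nhdsWithin] with a (ha : 0 < a)
      rw [Real.rpow_one]; ring
    have t3 : Tendsto (fun a : ℝ => (2:ℝ) * a) (𝓝[>] (0:ℝ)) (𝓝 0) := by
      have : Tendsto (fun a : ℝ => (2:ℝ) * a) (𝓝 (0:ℝ)) (𝓝 (2 * 0)) :=
        (tendsto_id.const_mul 2)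
      simpa using this.mono_left nhdsWithin_le_nhds
    have := (t1.sub (t2.const_mul 2)).add t3
    simpa [hF, mul_comm] using this
  have h2 : Tendsto G (𝓝[>] (0:ℝ)) (𝓝 2) := by
    have heq : (fun a : ℝ => 2 - F a) =ᶠ[𝓝[>] (0:ℝ)] G := by
      filter_upwards [Ioc_mem_nhdsGT_of_mem
        (⟨le_refl (0:ℝ), zero_lt_one⟩ : (0:ℝ) ∈ Set.Ico (0:ℝ) 1)] with a ha
      show 2 - F a = G a
      have ha0 : 0 < a := ha.1
      have ha1 : a ≤ 1 := ha.2
      have hderiv : ∀ x ∈ Set.uIcc a 1, HasDerivAt F ((Real.log x)^2) x := by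
        intro x hx
        rw [Set.uIcc_of_le ha1] at hx
        have hx0 : 0 < x := lt_of_lt_of_le ha0 hx.1
        have d1 : HasDerivAt (fun s : ℝ => s * (Real.log s)^2)
            (1 * (Real.log x)^2 + x * ((2:ℕ) * (Real.log x)^1 * x⁻¹)) x :=
          (hasDerivAt_id x).mul ((Real.hasDerivAt_log hx0.ne').pow 2)
        have d2 : HasDerivAt (fun s : ℝ => 2 * (s * Real.log s))
            (2 * (1 * Real.log x + x * x⁻¹)) x :=
          ((hasDerivAt_id x).mul (Real.hasDerivAt_log hx0.ne')).const_mul 2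
        have d3 : HasDerivAt (fun s : ℝ => 2 * s) 2 x := by
          simpa using (hasDerivAt_id x).const_mul (2:ℝ)
        have := (d1.sub d2).add d3
        convert this using 1
        · rfl
        · rfl
        · rfl
        · push_cast; linear_combination (2 - 2 * Real.log x) * mul_inv_cancel₀ hx0.ne'
      have hii : IntervalIntegrable (fun s => (Real.log s)^2) volume a 1 := by
        rw [intervalIntegrable_iff_integrableOn_Ioc_of_le ha1]
        exact logSqIntOn.mono_set (Set.Ioc_subset_Ioc_left ha0.le)
      have hFt : G a = F 1 - F a := intervalIntegral.integral_eq_sub_of_hasDerivAt hderiv hii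
      rw [hFt]
      simp [hF, Real.log_one]
    refine Tendsto.congr' heq ?_
    have := (tendsto_const_nhds : Tendsto (fun _ : ℝ => (2:ℝ)) (𝓝[>] (0:ℝ)) (𝓝 2)).sub hFtend
    simpa using this
  have : G 0 = 2 := tendsto_nhds_unique h1 h2
  simpa [hG] using this

theorem harmonic_tail_sq_avg :
    (∫ s in (0:ℝ)..1, (Real.log s) ^ 2) = 2 ∧
    Tendsto (fun n : ℕ => (1 / (n : ℝ)) *
        ∑ j ∈ Finset.Icc 1 n, (∑ i ∈ Finset.Icc j n, (1 / (i : ℝ))) ^ 2)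
      atTop (nhds 2) := by
  constructor
  · exact integralPart
  · have hH : Tendsto (fun n : ℕ => (n:ℝ)⁻¹ * ∑ i ∈ Finset.Icc 1 n, (1/(i:ℝ)))
        atTop (𝓝 0) := by
      have hc := (tendsto_one_div_add_atTop_nhds_zero_nat).cesaro
      refine hc.congr ?_
      intro n
      congr 1
      rw [show Finset.Icc 1 n = Finset.Ico 1 (n+1) by rw [Finset.Ico_add_one_right_eq_Icc],
        Finset.sum_Ico_eq_sum_range]
      simp [add_comm]
    have hmain : Tendsto (fun n : ℕ => 2 - (n:ℝ)⁻¹ * ∑ i ∈ Finset.Icc 1 n, (1/(i:ℝ)))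
        atTop (𝓝 2) := by
      have := (tendsto_const_nhds : Tendsto (fun _ : ℕ => (2:ℝ)) atTop (𝓝 2)).sub hH
      simpa using this
    refine hmain.congr' ?_
    filter_upwards [eventually_ge_atTop 1] with n hn
    have hn0 : (n:ℝ) ≠ 0 := by positivity
    rw [sumB n]
    field_simp
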